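/- arXiv:1206.1422 — 3 statements merged into one kernel-verified Lean document; each statement's English description precedes it below -/
import Mathlib

section
/- There exists an absolute constant a > 0 with the following property: for all positive integers n and c, if P is a set of n distinct points in ℝ² such that no point of the plane lies in more than c of the closed unit disks centered at the points of P, then P admits an enumeration (stacking order) p_1, …, p_n with vis(p_1, …, p_n) ≥ a · v(c) · n / c. -/
open MeasureTheory Filter Set Metric
open scoped ENNReal NNReal Topology

noncomputable section

/-- The Euclidean plane. -/
abbrev Pt : Type := EuclideanSpace ℝ (Fin 2)

/-- The visible perimeter of the arrangement of unit disks centered at `p 0, …, p (n-1)`,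
where `p i` is stacked below `p j` whenever `i < j`: the sum over `i` of the
1-dimensional Hausdorff measure of the part of the boundary circle of the disk at `p i`
not covered by the (open) disks stacked below it. -/
def vis {n : ℕ} (p : Fin n → Pt) : ℝ≥0∞ :=
  ∑ i : Fin n, μH[1] {x : Pt | dist x (p i) = 1 ∧ ∀ j : Fin n, j < i → 1 ≤ dist x (p j)}

/- The external angles associated to the sequence of points `p 0, …, p (n-1)`:
`τ_1 = 2π`; for `i > 1`, `τ_i = 0` if `p i` lies in the convex hull of the previous
points, and otherwise `τ_i` is the arc-length measure of the set of unit vectors `u`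
with `⟨u, p i⟩ > ⟨u, p j⟩` for all `j < i`. -/
open Classical in
def extAngle {n : ℕ} (p : Fin n → Pt) (i : Fin n) : ℝ≥0∞ :=
  if (i : ℕ) = 0 then ENNReal.ofReal (2 * Real.pi)
  else if p i ∈ convexHull ℝ (p '' {j : Fin n | j < i}) then 0
  else μH[1] {u : Pt | ‖u‖ = 1 ∧ ∀ j : Fin n, j < i →
    (inner ℝ u (p j) : ℝ) < (inner ℝ u (p i) : ℝ)}

/-- `vinf n` is `v(n)`: the infimum over all sets of `n` distinct points (encoded as
injective functions `Fin n → Pt`) of the maximum visible perimeter over all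
stacking orders (enumerations). -/
def vinf (n : ℕ) : ℝ≥0∞ :=
  ⨅ (p : Fin n → Pt) (_ : Function.Injective p),
    ⨆ σ : Equiv.Perm (Fin n), vis (p ∘ σ)

/-- A set of `n` points is `C`-dense if its maximum pairwise distance is at most
`C · n^{1/2}` times its minimum (nonzero) pairwise distance. -/
def CDense {n : ℕ} (C : ℝ) (p : Fin n → Pt) : Prop :=
  ∀ i j k l : Fin n, k ≠ l →
    dist (p i) (p j) ≤ C * Real.sqrt n * dist (p k) (p l)

/- The perimeter of the convex hull of `Q`: the 1-dimensional Hausdorff measure of its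
boundary if the hull has nonempty interior, and otherwise (hull is a point or a segment)
twice its diameter (= twice its length; `0` for a point or the empty set). -/
open Classical in
def per (Q : Set Pt) : ℝ≥0∞ :=
  if (interior (convexHull ℝ Q)).Nonempty then μH[1] (frontier (convexHull ℝ Q))
  else 2 * EMetric.diam (convexHull ℝ Q)

/-- The `k × k` integer grid `{1, …, k} × {1, …, k}` in the plane. -/
def grid (k : ℕ) : Set Pt :=
  {x | ∃ a b : ℕ, 1 ≤ a ∧ a ≤ k ∧ 1 ≤ b ∧ b ≤ k ∧ x 0 = (a : ℝ) ∧ x 1 = (b : ℝ)}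

/-! Auxiliary lemmas -/

lemma abs_coord_le_norm (x : Pt) (i : Fin 2) : |x i| ≤ ‖x‖ := by
  rw [EuclideanSpace.norm_eq, ← Real.sqrt_sq_eq_abs]
  refine Real.sqrt_le_sqrt ?_
  have := Finset.single_le_sum (f := fun j => ‖x j‖ ^ 2) (fun j _ => sq_nonneg _)
    (Finset.mem_univ i)
  simpa [Real.norm_eq_abs, sq_abs] using this

lemma abs_coord_sub_le_dist (x y : Pt) (i : Fin 2) : |x i - y i| ≤ dist x y := by
  rw [dist_eq_norm]
  simpa using abs_coord_le_norm (x - y) i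

lemma vis_cast {N N' : ℕ} (e : N = N') (q : Fin N' → Pt) :
    vis (q ∘ Fin.cast e) = vis q := by
  subst e
  rfl

/-- visible perimeter of a prefix is at most that of the whole sequence -/
lemma vis_prefix_le {m N : ℕ} (h : m ≤ N) (r : Fin N → Pt) (q : Fin m → Pt)
    (hq : ∀ k, r (Fin.castLE h k) = q k) : vis q ≤ vis r := by
  classical
  have key : ∀ k : Fin m,
      μH[1] {x : Pt | dist x (q k) = 1 ∧ ∀ j : Fin m, j < k → 1 ≤ dist x (q j)}
        = μH[1] {x : Pt | dist x (r (Fin.castLE h k)) = 1 ∧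
            ∀ j : Fin N, j < Fin.castLE h k → 1 ≤ dist x (r j)} := by
    intro k; congr 1; ext x
    simp only [Set.mem_setOf_eq, hq]
    refine and_congr_right fun _ => ⟨fun H j hj => ?_, fun H j hj => ?_⟩
    · have hjk : (j : ℕ) < (k : ℕ) := by
        have := Fin.lt_def.1 hj; simpa using this
      have hjv : (j : ℕ) < m := lt_trans hjk k.2
      have := H ⟨(j : ℕ), hjv⟩ (Fin.lt_def.2 hjk)
      rwa [← hq, show Fin.castLE h ⟨(j:ℕ), hjv⟩ = j from Fin.ext rfl] at this
    · have := H (Fin.castLE h j) (by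
        have := Fin.lt_def.1 hj; exact Fin.lt_def.2 (by simpa using this))
      rwa [hq] at this
  calc vis q = ∑ k : Fin m, μH[1] {x : Pt | dist x (r (Fin.castLE h k)) = 1 ∧
      ∀ j : Fin N, j < Fin.castLE h k → 1 ≤ dist x (r j)} :=
        Finset.sum_congr rfl (fun k _ => key k)
    _ = ∑ k ∈ Finset.univ.map (Fin.castLEEmb h),
        μH[1] {x : Pt | dist x (r k) = 1 ∧ ∀ j : Fin N, j < k → 1 ≤ dist x (r j)} := by
        rw [Finset.sum_map]; rfl
    _ ≤ ∑ k : Fin N, μH[1] {x : Pt | dist x (r k) = 1 ∧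
        ∀ j : Fin N, j < k → 1 ≤ dist x (r j)} :=
        Finset.sum_le_sum_of_subset (Finset.subset_univ _)
    _ = vis r := rfl

/-- extend an injection `Fin m → Fin N` to a permutation agreeing on the prefix -/
lemma exists_perm_extend {m N : ℕ} (h : m ≤ N) (f : Fin m → Fin N)
    (hf : Function.Injective f) :
    ∃ σ : Equiv.Perm (Fin N), ∀ k, σ (Fin.castLE h k) = f k := by
  classical
  let e : {x // x ∈ Set.range (Fin.castLE h)} ≃ {x // x ∈ Set.range f} :=
    (Equiv.ofInjective _ (Fin.castLE_injective h)).symm.trans (Equiv.ofInjective f hf)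
  refine ⟨e.extendSubtype, fun k => ?_⟩
  rw [Equiv.extendSubtype_apply_of_mem e _ ⟨k, rfl⟩]
  simp [e, Equiv.ofInjective_symm_apply]

/-- visible perimeter of a subfamily is at most the max over stacking orders -/
lemma vis_sub_le_iSup {d m : ℕ} (q : Fin m → Pt) (f : Fin d → Fin m)
    (hf : Function.Injective f) :
    vis (q ∘ f) ≤ ⨆ τ : Equiv.Perm (Fin m), vis (q ∘ τ) := by
  have h : d ≤ m := by simpa using Fintype.card_le_of_injective f hf
  obtain ⟨σ, hσ⟩ := exists_perm_extend h f hf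
  calc vis (q ∘ f) ≤ vis (q ∘ σ) :=
        vis_prefix_le h (q ∘ σ) (q ∘ f) (fun k => by simp [hσ k])
    _ ≤ ⨆ τ : Equiv.Perm (Fin m), vis (q ∘ τ) := le_iSup (fun τ : Equiv.Perm (Fin m) => vis (q ∘ τ)) σ

lemma vis_translate {m : ℕ} (q : Fin m → Pt) (v : Pt) :
    vis (fun k => q k + v) = vis q := by
  unfold vis
  refine Finset.sum_congr rfl fun k _ => ?_
  have himg : {x : Pt | dist x (q k + v) = 1 ∧ ∀ j : Fin m, j < k → 1 ≤ dist x (q j + v)}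
      = (fun x : Pt => x + v) '' {x : Pt | dist x (q k) = 1 ∧
          ∀ j : Fin m, j < k → 1 ≤ dist x (q j)} := by
    ext x
    simp only [Set.mem_image, Set.mem_setOf_eq]
    constructor
    · rintro ⟨h1, h2⟩
      refine ⟨x - v, ⟨?_, fun j hj => ?_⟩, by abel⟩
      · simpa [dist_add_right] using h1
      · have := h2 j hj
        calc (1:ℝ) ≤ dist x (q j + v) := this
          _ = dist (x - v) (q j) := by rw [← dist_add_right (x - v) (q j) v]; congr 1; abel
    · rintro ⟨y, ⟨h1, h2⟩, rfl⟩
      refine ⟨by simpa [dist_add_right] using h1, fun j hj => by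
        simpa [dist_add_right] using h2 j hj⟩
  rw [himg, (isometry_add_right v).hausdorffMeasure_image (Or.inl zero_le_one)]

/-- reindexing sums over a finset through `orderIsoOfFin` -/
lemma sum_orderIsoOfFin {α M : Type*} [LinearOrder α] [AddCommMonoid M] (s : Finset α) (f : α → M) :
    ∑ t : Fin s.card, f ((s.orderIsoOfFin rfl t : α)) = ∑ a ∈ s, f a := by
  rw [← Finset.sum_coe_sort s f]
  exact Fintype.sum_equiv (s.orderIsoOfFin rfl).toEquiv _ _ (fun t => rfl)

/-- reindexing sums over a finset through `equivFin` -/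
lemma sum_equivFin {α M : Type*} [AddCommMonoid M] (s : Finset α) (f : α → M) :
    ∑ t : Fin s.card, f ((s.equivFin.symm t : α)) = ∑ a ∈ s, f a := by
  rw [← Finset.sum_coe_sort s f]
  exact Fintype.sum_equiv s.equivFin.symm _ _ (fun t => rfl)

/-- splitting the visible perimeter along fibers of a labelling -/
lemma vis_le_sum_fiber {N : ℕ} {β : Type*} [Fintype β] [DecidableEq β]
    (r : Fin N → Pt) (G : Fin N → β) :
    vis r ≤ ∑ b : β, vis (fun t : Fin (Finset.univ.filter fun k => G k = b).card =>
      r (((Finset.univ.filter fun k => G k = b).orderIsoOfFin rfl t : Fin N))) := by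
  classical
  unfold vis
  rw [← Finset.sum_fiberwise Finset.univ G
    (fun k => μH[1] {x : Pt | dist x (r k) = 1 ∧ ∀ j : Fin N, j < k → 1 ≤ dist x (r j)})]
  refine Finset.sum_le_sum fun b _ => ?_
  rw [← sum_orderIsoOfFin (Finset.univ.filter fun k => G k = b)
    (fun k => μH[1] {x : Pt | dist x (r k) = 1 ∧ ∀ j : Fin N, j < k → 1 ≤ dist x (r j)})]
  refine Finset.sum_le_sum fun t _ => measure_mono ?_
  rintro x ⟨h1, h2⟩
  refine ⟨h1, fun s hs => ?_⟩
  exact h2 _ (Subtype.coe_lt_coe.2 (((Finset.univ.filter fun k => G k = b).orderIsoOfFin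
    rfl).lt_iff_lt.2 hs))

/-- visible perimeter adds up for an appended far-away family -/
lemma vis_append {m₁ m₂ : ℕ} (r₁ : Fin m₁ → Pt) (r₂ : Fin m₂ → Pt)
    (far : ∀ a b, 2 ≤ dist (r₁ a) (r₂ b)) :
    vis r₁ + vis r₂ ≤ vis (Fin.append r₁ r₂) := by
  unfold vis
  rw [Fin.sum_univ_add]
  refine add_le_add (Finset.sum_le_sum fun a _ => measure_mono ?_)
    (Finset.sum_le_sum fun b _ => measure_mono ?_)
  · rintro x ⟨h1, h2⟩
    refine ⟨by rw [Fin.append_left]; exact h1, fun j hj => ?_⟩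
    have hjv : (j : ℕ) < m₁ := by
      have := Fin.lt_def.1 hj; simp only [Fin.coe_castAdd] at this
      exact lt_of_lt_of_le this a.2.le
    have hjeq : j = Fin.castAdd m₂ ⟨(j : ℕ), hjv⟩ := Fin.ext rfl
    rw [hjeq, Fin.append_left]
    refine h2 ⟨(j : ℕ), hjv⟩ (Fin.lt_def.2 ?_)
    have := Fin.lt_def.1 hj; simpa using this
  · rintro x ⟨h1, h2⟩
    refine ⟨by rw [Fin.append_right]; exact h1, fun j hj => ?_⟩
    rcases lt_or_ge (j : ℕ) m₁ with hl | hr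
    · have hjeq : j = Fin.castAdd m₂ ⟨(j : ℕ), hl⟩ := Fin.ext rfl
      rw [hjeq, Fin.append_left]
      have hf := far ⟨(j : ℕ), hl⟩ b
      have htr := dist_triangle (r₁ ⟨(j : ℕ), hl⟩) x (r₂ b)
      have hc := dist_comm x (r₁ ⟨(j : ℕ), hl⟩)
      linarith
    · have hjv : (j : ℕ) - m₁ < m₂ := by have := j.2; omega
      have hjeq : j = Fin.natAdd m₁ ⟨(j : ℕ) - m₁, hjv⟩ := Fin.ext (by simp; omega)
      rw [hjeq, Fin.append_right]
      refine h2 ⟨(j : ℕ) - m₁, hjv⟩ (Fin.lt_def.2 ?_)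
      have := Fin.lt_def.1 hj; simp only [Fin.coe_natAdd] at this; simp; omega

/-- concatenating far-apart groups -/
lemma concat_lemma {n : ℕ} (p : Fin n → Pt) :
    ∀ (J : ℕ) (m : Fin J → ℕ) (g : ∀ j, Fin (m j) → Fin n),
      (∀ j, Function.Injective (g j)) →
      (∀ (j j') (a : Fin (m j)) (b : Fin (m j')), j ≠ j' →
        2 ≤ dist (p (g j a)) (p (g j' b))) →
      ∃ G : Fin (∑ j, m j) → Fin n, Function.Injective G ∧
        (∀ k, ∃ j a, G k = g j a) ∧ ∑ j, vis (p ∘ g j) ≤ vis (p ∘ G) := by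
  intro J
  induction J with
  | zero =>
    intro m g hg far
    have e : (∑ j, m j) = 0 := by simp
    exact ⟨fun k => (Fin.cast e k).elim0, fun a b h => (Fin.cast e a).elim0,
      fun k => (Fin.cast e k).elim0, by simp⟩
  | succ J ih =>
    intro m g hg far
    obtain ⟨G', hG'inj, hG'mem, hG'vis⟩ := ih (fun j => m j.succ) (fun j => g j.succ)
      (fun j => hg j.succ)
      (fun j j' a b hjj => far j.succ j'.succ a b (fun hc => hjj (Fin.succ_injective _ hc)))
    have e : (∑ j, m j) = m 0 + ∑ j : Fin J, m j.succ := Fin.sum_univ_succ m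
    set Gbig : Fin (m 0 + ∑ j : Fin J, m j.succ) → Fin n := Fin.append (g 0) G' with hGbig
    have hrep : ∀ k : Fin (m 0 + ∑ j : Fin J, m j.succ),
        (∃ a, k = Fin.castAdd _ a) ∨ (∃ b, k = Fin.natAdd _ b) := fun k =>
      Fin.addCases (fun a => Or.inl ⟨a, rfl⟩) (fun b => Or.inr ⟨b, rfl⟩) k
    have hmem : ∀ k, ∃ j a, Gbig k = g j a := by
      intro k
      rcases hrep k with ⟨a, rfl⟩ | ⟨b, rfl⟩
      · exact ⟨0, a, by rw [hGbig, Fin.append_left]⟩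
      · obtain ⟨j, a, ha⟩ := hG'mem b
        exact ⟨j.succ, a, by rw [hGbig, Fin.append_right, ha]⟩
    have hinj : Function.Injective Gbig := by
      intro a b hab
      rcases hrep a with ⟨a1, rfl⟩ | ⟨a2, rfl⟩ <;> rcases hrep b with ⟨b1, rfl⟩ | ⟨b2, rfl⟩
      · rw [hGbig, Fin.append_left, Fin.append_left] at hab
        rw [hg 0 hab]
      · exfalso
        rw [hGbig, Fin.append_left, Fin.append_right] at hab
        obtain ⟨j, cc, hc⟩ := hG'mem b2
        have h2 := far 0 j.succ a1 cc (Ne.symm (Fin.succ_ne_zero j))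
        rw [hab, hc, dist_self] at h2
        norm_num at h2
      · exfalso
        rw [hGbig, Fin.append_right, Fin.append_left] at hab
        obtain ⟨j, cc, hc⟩ := hG'mem a2
        have h2 := far 0 j.succ b1 cc (Ne.symm (Fin.succ_ne_zero j))
        rw [← hab, hc, dist_self] at h2
        norm_num at h2
      · rw [hGbig, Fin.append_right, Fin.append_right] at hab
        rw [hG'inj hab]
    have hcomp : p ∘ Gbig = Fin.append (p ∘ g 0) (p ∘ G') := by
      funext k
      rcases hrep k with ⟨a, rfl⟩ | ⟨b, rfl⟩
      · simp only [Function.comp_apply, hGbig, Fin.append_left]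
      · simp only [Function.comp_apply, hGbig, Fin.append_right]
    refine ⟨Gbig ∘ Fin.cast e, hinj.comp (Fin.cast_injective e), fun k => hmem _, ?_⟩
    have hfar2 : ∀ a b, 2 ≤ dist ((p ∘ g 0) a) ((p ∘ G') b) := by
      intro a b
      obtain ⟨j, cc, hc⟩ := hG'mem b
      simp only [Function.comp_apply, hc]
      exact far 0 j.succ a cc (Ne.symm (Fin.succ_ne_zero j))
    calc ∑ j : Fin (J+1), vis (p ∘ g j)
        = vis (p ∘ g 0) + ∑ j : Fin J, vis (p ∘ g j.succ) := Fin.sum_univ_succ _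
      _ ≤ vis (p ∘ g 0) + vis (p ∘ G') := add_le_add_right hG'vis _
      _ ≤ vis (Fin.append (p ∘ g 0) (p ∘ G')) := vis_append _ _ hfar2
      _ = vis (p ∘ Gbig) := by rw [hcomp]
      _ = vis ((p ∘ Gbig) ∘ Fin.cast e) := (vis_cast e _).symm
      _ = vis (p ∘ (Gbig ∘ Fin.cast e)) := rfl

/-- the padding lemma: `vinf c` is controlled by the best stacking of any nonempty family -/
lemma vinf_le_pad {m : ℕ} (c : ℕ) (hm : 0 < m) (q : Fin m → Pt) (hq : Function.Injective q) :
    vinf c ≤ ((c / m + 1 : ℕ) : ℝ≥0∞) * ⨆ τ : Equiv.Perm (Fin m), vis (q ∘ τ) := by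
  classical
  set S := ⨆ τ : Equiv.Perm (Fin m), vis (q ∘ τ) with hS
  set B := ∑ i : Fin m, ‖q i‖ with hB
  have hB0 : 0 ≤ B := Finset.sum_nonneg fun i _ => norm_nonneg _
  have hBle : ∀ i, ‖q i‖ ≤ B := fun i =>
    Finset.single_le_sum (fun j _ => norm_nonneg (q j)) (Finset.mem_univ i)
  have habs : ∀ k : Fin m, |q k 0| ≤ B := fun k => (abs_coord_le_norm (q k) 0).trans (hBle k)
  set e₀ : Pt := EuclideanSpace.single (0 : Fin 2) (2 * B + 1) with he₀
  set res : Fin c → Fin m := fun i => ⟨(i : ℕ) % m, Nat.mod_lt _ hm⟩ with hres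
  set phat : Fin c → Pt := fun i => q (res i) + (((i : ℕ) / m : ℕ) : ℝ) • e₀ with hphat
  have hcoord : ∀ i : Fin c, phat i 0 = q (res i) 0 + (((i:ℕ)/m : ℕ) : ℝ) * (2*B+1) := by
    intro i
    simp [hphat, he₀, PiLp.add_apply, PiLp.smul_apply, EuclideanSpace.single_apply,
      smul_eq_mul]
  have hinj : Function.Injective phat := by
    intro i i' hii
    by_cases hd : (i : ℕ) / m = (i' : ℕ) / m
    · have hqq : q (res i) = q (res i') := by
        have h2 : q (res i) + (((i:ℕ)/m : ℕ) : ℝ) • e₀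
            = q (res i') + (((i:ℕ)/m : ℕ) : ℝ) • e₀ := by
          rw [hphat] at hii; simpa [hd] using hii
        exact add_right_cancel h2
      have hreq : (i : ℕ) % m = (i' : ℕ) % m := congrArg Fin.val (hq hqq)
      have hdm1 := Nat.div_add_mod (i : ℕ) m
      have hdm2 := Nat.div_add_mod (i' : ℕ) m
      refine Fin.ext ?_
      calc (i : ℕ) = m * ((i : ℕ) / m) + (i : ℕ) % m := hdm1.symm
        _ = m * ((i' : ℕ) / m) + (i' : ℕ) % m := by rw [hd, hreq]
        _ = (i' : ℕ) := hdm2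
    · exfalso
      have h0 : phat i 0 = phat i' 0 := congrArg (fun z : Pt => z 0) hii
      rw [hcoord, hcoord] at h0
      set d : ℝ := (((i:ℕ)/m : ℕ) : ℝ) with hdd
      set d' : ℝ := (((i':ℕ)/m : ℕ) : ℝ) with hdd'
      have hge : (1:ℝ) ≤ |d' - d| := by
        have hne : (((i:ℕ)/m : ℕ) : ℤ) ≠ (((i':ℕ)/m : ℕ) : ℤ) := by exact_mod_cast hd
        have h1 : (1:ℤ) ≤ |(((i':ℕ)/m : ℕ) : ℤ) - (((i:ℕ)/m : ℕ) : ℤ)| :=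
          Int.one_le_abs (sub_ne_zero.2 (Ne.symm hne))
        have : ((1:ℤ):ℝ) ≤ |((((i':ℕ)/m : ℕ) : ℤ) : ℝ) - ((((i:ℕ)/m : ℕ) : ℤ) : ℝ)| := by
          rw [← Int.cast_sub, ← Int.cast_abs]; exact_mod_cast h1
        simpa only [Int.cast_one, Int.cast_natCast, hdd, hdd'] using this
      have heq : q (res i) 0 - q (res i') 0 = (d' - d) * (2*B+1) := by linear_combination h0
      have hi1 := abs_le.1 (habs (res i))
      have hi2 := abs_le.1 (habs (res i'))
      have h2B : (0:ℝ) ≤ 2*B+1 := by linarith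
      rcases le_abs.1 hge with h | h
      · have := mul_le_mul_of_nonneg_right h h2B
        rw [one_mul] at this
        linarith
      · have := mul_le_mul_of_nonneg_right h h2B
        rw [one_mul] at this
        nlinarith
  have hstart : vinf c ≤ ⨆ σ : Equiv.Perm (Fin c), vis (phat ∘ σ) := iInf₂_le phat hinj
  refine hstart.trans (iSup_le fun σ => ?_)
  set G : Fin c → Fin (c / m + 1) := fun k =>
    ⟨(σ k : ℕ) / m, Nat.lt_succ_of_le (Nat.div_le_div_right (σ k).2.le)⟩ with hG
  have hmain := vis_le_sum_fiber (phat ∘ σ) G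
  refine hmain.trans ?_
  have hfiber : ∀ b : Fin (c / m + 1),
      vis (fun t : Fin (Finset.univ.filter fun k => G k = b).card =>
        (phat ∘ σ) (((Finset.univ.filter fun k => G k = b).orderIsoOfFin rfl t : Fin c)))
      ≤ S := by
    intro b
    set K := Finset.univ.filter fun k => G k = b with hK
    set f : Fin K.card → Fin m := fun t => res (σ ((K.orderIsoOfFin rfl t : Fin c))) with hf
    have hdivb : ∀ t : Fin K.card, (σ ((K.orderIsoOfFin rfl t : Fin c)) : ℕ) / m = (b : ℕ) := by
      intro t
      have hmem := (K.orderIsoOfFin rfl t).2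
      exact congrArg Fin.val (Finset.mem_filter.1 hmem).2
    have hval : (fun t : Fin K.card => (phat ∘ σ) ((K.orderIsoOfFin rfl t : Fin c)))
        = fun t => q (f t) + ((b : ℕ) : ℝ) • e₀ := by
      funext t
      simp only [Function.comp_apply, hphat, hf, hdivb t]
    have hfinj : Function.Injective f := by
      intro t t' htt
      have hmod : (σ ((K.orderIsoOfFin rfl t : Fin c)) : ℕ) % m
          = (σ ((K.orderIsoOfFin rfl t' : Fin c)) : ℕ) % m := congrArg Fin.val htt
      have hdiv : (σ ((K.orderIsoOfFin rfl t : Fin c)) : ℕ) / m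
          = (σ ((K.orderIsoOfFin rfl t' : Fin c)) : ℕ) / m := by
        rw [hdivb t, hdivb t']
      have hσ : σ ((K.orderIsoOfFin rfl t : Fin c)) = σ ((K.orderIsoOfFin rfl t' : Fin c)) := by
        refine Fin.ext ?_
        calc (σ ((K.orderIsoOfFin rfl t : Fin c)) : ℕ)
            = m * ((σ ((K.orderIsoOfFin rfl t : Fin c)) : ℕ) / m)
              + (σ ((K.orderIsoOfFin rfl t : Fin c)) : ℕ) % m :=
                (Nat.div_add_mod _ m).symm
          _ = m * ((σ ((K.orderIsoOfFin rfl t' : Fin c)) : ℕ) / m)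
              + (σ ((K.orderIsoOfFin rfl t' : Fin c)) : ℕ) % m := by rw [hdiv, hmod]
          _ = (σ ((K.orderIsoOfFin rfl t' : Fin c)) : ℕ) := Nat.div_add_mod _ m
      have := σ.injective hσ
      have := Subtype.coe_injective this
      exact (K.orderIsoOfFin rfl).injective this
    calc vis (fun t : Fin K.card => (phat ∘ σ) ((K.orderIsoOfFin rfl t : Fin c)))
        = vis (fun t => q (f t) + ((b : ℕ) : ℝ) • e₀) := by rw [hval]
      _ = vis (q ∘ f) := vis_translate (q ∘ f) (((b : ℕ) : ℝ) • e₀)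
      _ ≤ S := vis_sub_le_iSup q f hfinj
  calc ∑ b : Fin (c / m + 1), vis (fun t : Fin (Finset.univ.filter fun k => G k = b).card =>
        (phat ∘ σ) (((Finset.univ.filter fun k => G k = b).orderIsoOfFin rfl t : Fin c)))
      ≤ ∑ _b : Fin (c / m + 1), S := Finset.sum_le_sum fun b _ => hfiber b
    _ = ((c / m + 1 : ℕ) : ℝ≥0∞) * S := by
        rw [Finset.sum_const, Finset.card_univ, Fintype.card_fin, nsmul_eq_mul]

/-- points in distinct same-parity cells are far apart (1d version) -/
lemma far_floor {x y : ℝ} {u v : ℤ} (hu : ⌊x / 6⌋ = u) (hv : ⌊y / 6⌋ = v)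
    (hne : u ≠ v) (hdvd : (2:ℤ) ∣ (u - v)) : 2 ≤ |x - y| := by
  have hx1 : (u : ℝ) ≤ x / 6 := hu ▸ Int.floor_le (x / 6)
  have hx2 : x / 6 < u + 1 := by
    have := Int.lt_floor_add_one (x / 6); rwa [hu] at this
  have hy1 : (v : ℝ) ≤ y / 6 := hv ▸ Int.floor_le (y / 6)
  have hy2 : y / 6 < v + 1 := by
    have := Int.lt_floor_add_one (y / 6); rwa [hv] at this
  have hcase : u + 2 ≤ v ∨ v + 2 ≤ u := by omega
  rcases hcase with h | h
  · have h' : (u : ℝ) + 2 ≤ v := by exact_mod_cast h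
    have : 2 ≤ y - x := by linarith
    calc (2:ℝ) ≤ y - x := this
      _ ≤ |x - y| := by rw [abs_sub_comm]; exact le_abs_self _
  · have h' : (v : ℝ) + 2 ≤ u := by exact_mod_cast h
    have : 2 ≤ x - y := by linarith
    exact this.trans (le_abs_self _)

/-- each `6 × 6` cell contains at most `36 c` points when depth is at most `c` -/
lemma cell_card_le {n cc : ℕ} (p : Fin n → Pt)
    (hdepth : ∀ x : Pt, ({i : Fin n | dist x (p i) ≤ 1}).ncard ≤ cc) (u v : ℤ) :
    (Finset.univ.filter fun i => ⌊p i 0 / 6⌋ = u ∧ ⌊p i 1 / 6⌋ = v).card ≤ 36 * cc := by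
  classical
  have hfin : ∀ x : Pt, (Finset.univ.filter fun i => dist x (p i) ≤ 1).card ≤ cc := by
    intro x
    have h := hdepth x
    rwa [show {i : Fin n | dist x (p i) ≤ 1}
        = ↑(Finset.univ.filter fun i => dist x (p i) ≤ 1) by ext i; simp,
      Set.ncard_coe_finset] at h
  set ctr : Fin 6 × Fin 6 → Pt := fun st =>
    (WithLp.equiv 2 (Fin 2 → ℝ)).symm
      ![6*(u:ℝ) + (st.1 : ℕ) + 1/2, 6*(v:ℝ) + (st.2 : ℕ) + 1/2] with hctr
  have hsub : (Finset.univ.filter fun i => ⌊p i 0 / 6⌋ = u ∧ ⌊p i 1 / 6⌋ = v)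
      ⊆ (Finset.univ : Finset (Fin 6 × Fin 6)).biUnion
        (fun st => Finset.univ.filter fun i => dist (ctr st) (p i) ≤ 1) := by
    intro i hi
    simp only [Finset.mem_filter, Finset.mem_univ, true_and] at hi
    obtain ⟨hu, hv⟩ := hi
    have hx1 : 6*(u:ℝ) ≤ p i 0 := by
      have := hu ▸ Int.floor_le (p i 0 / 6); linarith
    have hx2 : p i 0 < 6*(u:ℝ) + 6 := by
      have := Int.lt_floor_add_one (p i 0 / 6); rw [hu] at this; linarith
    have hy1 : 6*(v:ℝ) ≤ p i 1 := by
      have := hv ▸ Int.floor_le (p i 1 / 6); linarith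
    have hy2 : p i 1 < 6*(v:ℝ) + 6 := by
      have := Int.lt_floor_add_one (p i 1 / 6); rw [hv] at this; linarith
    set a : ℝ := p i 0 - 6*(u:ℝ) with ha
    set b : ℝ := p i 1 - 6*(v:ℝ) with hb
    have ha0 : 0 ≤ a := by linarith
    have ha6 : a < 6 := by linarith
    have hb0 : 0 ≤ b := by linarith
    have hb6 : b < 6 := by linarith
    have hs6 : ⌊a⌋₊ < 6 := (Nat.floor_lt ha0).2 (by exact_mod_cast ha6)
    have ht6 : ⌊b⌋₊ < 6 := (Nat.floor_lt hb0).2 (by exact_mod_cast hb6)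
    refine Finset.mem_biUnion.2 ⟨(⟨⌊a⌋₊, hs6⟩, ⟨⌊b⌋₊, ht6⟩), Finset.mem_univ _, ?_⟩
    simp only [Finset.mem_filter, Finset.mem_univ, true_and]
    have hd : dist (ctr (⟨⌊a⌋₊, hs6⟩, ⟨⌊b⌋₊, ht6⟩)) (p i)
        = Real.sqrt (((6*(u:ℝ) + ⌊a⌋₊ + 1/2) - p i 0)^2
          + ((6*(v:ℝ) + ⌊b⌋₊ + 1/2) - p i 1)^2) := by
      rw [EuclideanSpace.dist_eq, Fin.sum_univ_two]
      congr 1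
      · simp [hctr, Real.dist_eq, WithLp.equiv_symm_apply, PiLp.toLp_apply, sq_abs]
    have hs1 : (⌊a⌋₊ : ℝ) ≤ a := Nat.floor_le ha0
    have hs2 : a < ⌊a⌋₊ + 1 := Nat.lt_floor_add_one a
    have ht1 : (⌊b⌋₊ : ℝ) ≤ b := Nat.floor_le hb0
    have ht2 : b < ⌊b⌋₊ + 1 := Nat.lt_floor_add_one b
    have h1 : ((6*(u:ℝ) + ⌊a⌋₊ + 1/2) - p i 0)^2 ≤ (1/2)^2 := by
      have hval : (6*(u:ℝ) + ⌊a⌋₊ + 1/2) - p i 0 = (⌊a⌋₊ + 1/2) - a := by rw [ha]; ring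
      rw [hval]
      exact sq_le_sq' (by linarith) (by linarith)
    have h2 : ((6*(v:ℝ) + ⌊b⌋₊ + 1/2) - p i 1)^2 ≤ (1/2)^2 := by
      have hval : (6*(v:ℝ) + ⌊b⌋₊ + 1/2) - p i 1 = (⌊b⌋₊ + 1/2) - b := by rw [hb]; ring
      rw [hval]
      exact sq_le_sq' (by linarith) (by linarith)
    rw [hd]
    calc Real.sqrt (((6*(u:ℝ) + ⌊a⌋₊ + 1/2) - p i 0)^2
          + ((6*(v:ℝ) + ⌊b⌋₊ + 1/2) - p i 1)^2)
        ≤ Real.sqrt 1 := Real.sqrt_le_sqrt (by norm_num at h1 h2 ⊢; linarith)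
      _ = 1 := Real.sqrt_one
  calc (Finset.univ.filter fun i => ⌊p i 0 / 6⌋ = u ∧ ⌊p i 1 / 6⌋ = v).card
      ≤ ((Finset.univ : Finset (Fin 6 × Fin 6)).biUnion
        (fun st => Finset.univ.filter fun i => dist (ctr st) (p i) ≤ 1)).card :=
        Finset.card_le_card hsub
    _ ≤ ∑ st : Fin 6 × Fin 6,
        (Finset.univ.filter fun i => dist (ctr st) (p i) ≤ 1).card :=
        Finset.card_biUnion_le
    _ ≤ ∑ _st : Fin 6 × Fin 6, cc := Finset.sum_le_sum fun st _ => hfin (ctr st)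
    _ = 36 * cc := by simp [Finset.sum_const, Finset.card_univ]


/-- if no point of the plane lies in more than `c` of the `n` unit disks,
then some stacking order achieves visible perimeter at least `a · v(c) · n / c`. -/
theorem exists_stacking_order_vis_ge_of_bounded_overlap :
    ∃ a : ℝ, 0 < a ∧ ∀ (n c : ℕ), 0 < n → 0 < c →
      ∀ p : Fin n → Pt, Function.Injective p →
        (∀ x : Pt, ({i : Fin n | dist x (p i) ≤ 1}).ncard ≤ c) →
        ∃ σ : Equiv.Perm (Fin n),
          ENNReal.ofReal a * vinf c * (n : ℝ≥0∞) / (c : ℝ≥0∞) ≤ vis (p ∘ σ) := by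
  classical
  refine ⟨1/148, by norm_num, fun n c hn hc p hp hdepth => ?_⟩
  -- pigeonhole: one parity class of cells contains at least a quarter of the points
  obtain ⟨w, hw⟩ : ∃ w : ZMod 2 × ZMod 2, n ≤ 4 * (Finset.univ.filter fun i =>
      ((⌊p i 0 / 6⌋ : ZMod 2), (⌊p i 1 / 6⌋ : ZMod 2)) = w).card := by
    by_contra hcon
    push_neg at hcon
    have hsum : ∑ w : ZMod 2 × ZMod 2, (Finset.univ.filter fun i =>
        ((⌊p i 0 / 6⌋ : ZMod 2), (⌊p i 1 / 6⌋ : ZMod 2)) = w).card = n := by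
      rw [← Finset.card_eq_sum_card_fiberwise (fun x _ => Finset.mem_univ
        (((⌊p x 0 / 6⌋ : ZMod 2), (⌊p x 1 / 6⌋ : ZMod 2))))]
      simp
    have hcard4 : Fintype.card (ZMod 2 × ZMod 2) = 4 := by
      rw [Fintype.card_prod, ZMod.card]
    have hlt : ∑ w : ZMod 2 × ZMod 2, 4 * (Finset.univ.filter fun i =>
          ((⌊p i 0 / 6⌋ : ZMod 2), (⌊p i 1 / 6⌋ : ZMod 2)) = w).card
        < ∑ _w : ZMod 2 × ZMod 2, n :=
      Finset.sum_lt_sum_of_nonempty Finset.univ_nonempty fun w _ => hcon w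
    rw [← Finset.mul_sum, hsum, Finset.sum_const, Finset.card_univ, hcard4,
      smul_eq_mul] at hlt
    omega
  set A := Finset.univ.filter fun i : Fin n =>
    ((⌊p i 0 / 6⌋ : ZMod 2), (⌊p i 1 / 6⌋ : ZMod 2)) = w with hA
  set 𝒞 := A.image (fun i => ((⌊p i 0 / 6⌋, ⌊p i 1 / 6⌋) : ℤ × ℤ)) with hC
  set J := 𝒞.card with hJ
  set cEnum : Fin J ≃ {x // x ∈ 𝒞} := 𝒞.equivFin.symm with hcEnum
  set I : Fin J → Finset (Fin n) := fun j => A.filter (fun i =>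
    ((⌊p i 0 / 6⌋, ⌊p i 1 / 6⌋) : ℤ × ℤ) = (cEnum j : ℤ × ℤ)) with hI
  set m : Fin J → ℕ := fun j => (I j).card with hm
  have hMsum : ∑ j, m j = A.card := by
    rw [Finset.card_eq_sum_card_image (fun i => ((⌊p i 0 / 6⌋, ⌊p i 1 / 6⌋) : ℤ × ℤ)) A,
      ← sum_equivFin (A.image (fun i => ((⌊p i 0 / 6⌋, ⌊p i 1 / 6⌋) : ℤ × ℤ)))
        (fun v => (A.filter fun i => ((⌊p i 0 / 6⌋, ⌊p i 1 / 6⌋) : ℤ × ℤ) = v).card)]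
  have hm1 : ∀ j, 0 < m j := by
    intro j
    have hmem : (cEnum j : ℤ × ℤ) ∈ 𝒞 := (cEnum j).2
    obtain ⟨i, hiA, hieq⟩ := Finset.mem_image.1 hmem
    exact Finset.card_pos.2 ⟨i, Finset.mem_filter.2 ⟨hiA, hieq⟩⟩
  have hm36 : ∀ j, m j ≤ 36 * c := by
    intro j
    have hsub : I j ⊆ Finset.univ.filter (fun i =>
        ⌊p i 0 / 6⌋ = (cEnum j : ℤ × ℤ).1
        ∧ ⌊p i 1 / 6⌋ = (cEnum j : ℤ × ℤ).2) := by
      intro i hi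
      have h2 := (Finset.mem_filter.1 hi).2
      exact Finset.mem_filter.2 ⟨Finset.mem_univ _,
        congrArg Prod.fst h2, congrArg Prod.snd h2⟩
    exact (Finset.card_le_card hsub).trans (cell_card_le p hdepth _ _)
  set sub : ∀ j : Fin J, Fin (m j) → Fin n :=
    fun j t => ((I j).orderIsoOfFin rfl t : Fin n) with hsubd
  have hsubinj : ∀ j, Function.Injective (sub j) := fun j t t' h =>
    ((I j).orderIsoOfFin rfl).injective (Subtype.coe_injective h)
  have hsubmem : ∀ j t, sub j t ∈ I j := fun j t => ((I j).orderIsoOfFin rfl t).2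
  have hτ : ∀ j : Fin J, ∃ τ : Equiv.Perm (Fin (m j)),
      ∀ τ' : Equiv.Perm (Fin (m j)), vis ((p ∘ sub j) ∘ τ') ≤ vis ((p ∘ sub j) ∘ τ) :=
    fun j => Finite.exists_max (fun τ : Equiv.Perm (Fin (m j)) => vis ((p ∘ sub j) ∘ τ))
  choose τ hτmax using hτ
  set g : ∀ j : Fin J, Fin (m j) → Fin n := fun j => sub j ∘ τ j with hgd
  have hginj : ∀ j, Function.Injective (g j) := fun j => (hsubinj j).comp (τ j).injective
  have hgmem : ∀ j a, g j a ∈ I j := fun j a => hsubmem j _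
  have hfar : ∀ (j j') (a : Fin (m j)) (b : Fin (m j')), j ≠ j' →
      2 ≤ dist (p (g j a)) (p (g j' b)) := by
    intro j j' a b hjj
    have hA1 := Finset.mem_filter.1 (hgmem j a)
    have hA2 := Finset.mem_filter.1 (hgmem j' b)
    have hclsa := (Finset.mem_filter.1 hA1.1).2
    have hclsb := (Finset.mem_filter.1 hA2.1).2
    have hcls_eq : ((⌊p (g j a) 0 / 6⌋ : ZMod 2), (⌊p (g j a) 1 / 6⌋ : ZMod 2))
        = ((⌊p (g j' b) 0 / 6⌋ : ZMod 2), (⌊p (g j' b) 1 / 6⌋ : ZMod 2)) :=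
      hclsa.trans hclsb.symm
    have hcne : (cEnum j : ℤ × ℤ) ≠ (cEnum j' : ℤ × ℤ) :=
      fun heq => hjj (cEnum.injective (Subtype.coe_injective heq))
    have hcells : ((⌊p (g j a) 0 / 6⌋, ⌊p (g j a) 1 / 6⌋) : ℤ × ℤ)
        ≠ ((⌊p (g j' b) 0 / 6⌋, ⌊p (g j' b) 1 / 6⌋) : ℤ × ℤ) := by
      rw [hA1.2, hA2.2]; exact hcne
    have hcomp : ⌊p (g j a) 0 / 6⌋ ≠ ⌊p (g j' b) 0 / 6⌋
        ∨ ⌊p (g j a) 1 / 6⌋ ≠ ⌊p (g j' b) 1 / 6⌋ := by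
      by_contra hcon
      push_neg at hcon
      exact hcells (by rw [hcon.1, hcon.2])
    rcases hcomp with hne | hne
    · have hz : ((⌊p (g j a) 0 / 6⌋ : ZMod 2)) = ((⌊p (g j' b) 0 / 6⌋ : ZMod 2)) :=
        congrArg Prod.fst hcls_eq
      have hmodeq := (ZMod.intCast_eq_intCast_iff _ _ _).1 hz
      have hd2 := Int.ModEq.dvd hmodeq
      have hdvd : (2:ℤ) ∣ (⌊p (g j a) 0 / 6⌋ - ⌊p (g j' b) 0 / 6⌋) := by
        have : ((2:ℕ):ℤ) ∣ (⌊p (g j' b) 0 / 6⌋ - ⌊p (g j a) 0 / 6⌋) := hd2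
        omega
      exact (far_floor rfl rfl hne hdvd).trans (abs_coord_sub_le_dist _ _ 0)
    · have hz : ((⌊p (g j a) 1 / 6⌋ : ZMod 2)) = ((⌊p (g j' b) 1 / 6⌋ : ZMod 2)) :=
        congrArg Prod.snd hcls_eq
      have hmodeq := (ZMod.intCast_eq_intCast_iff _ _ _).1 hz
      have hd2 := Int.ModEq.dvd hmodeq
      have hdvd : (2:ℤ) ∣ (⌊p (g j a) 1 / 6⌋ - ⌊p (g j' b) 1 / 6⌋) := by
        have : ((2:ℕ):ℤ) ∣ (⌊p (g j' b) 1 / 6⌋ - ⌊p (g j a) 1 / 6⌋) := hd2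
        omega
      exact (far_floor rfl rfl hne hdvd).trans (abs_coord_sub_le_dist _ _ 1)
  obtain ⟨G, hGinj, hGmem, hGvis⟩ := concat_lemma p J m g hginj hfar
  have hle : (∑ j, m j) ≤ n := by simpa using Fintype.card_le_of_injective G hGinj
  obtain ⟨σ, hσ⟩ := exists_perm_extend hle G hGinj
  refine ⟨σ, ?_⟩
  have hvis1 : vis (p ∘ G) ≤ vis (p ∘ σ) :=
    vis_prefix_le hle (p ∘ σ) (p ∘ G) (fun k => by simp [hσ k])
  have hstep : ∀ j, vinf c * (m j : ℝ≥0∞) ≤ ((37 * c : ℕ) : ℝ≥0∞) * vis (p ∘ g j) := by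
    intro j
    have hP := vinf_le_pad c (hm1 j) (p ∘ sub j) (hp.comp (hsubinj j))
    have hsup : (⨆ τ' : Equiv.Perm (Fin (m j)), vis ((p ∘ sub j) ∘ τ')) ≤ vis (p ∘ g j) :=
      iSup_le fun τ' => hτmax j τ'
    have hP2 : vinf c ≤ ((c / m j + 1 : ℕ) : ℝ≥0∞) * vis (p ∘ g j) :=
      hP.trans (mul_le_mul_right hsup _)
    have hnat : (c / m j + 1) * m j ≤ 37 * c := by
      have h1 : c / m j * m j ≤ c := Nat.div_mul_le_self c (m j)
      have h2 := hm36 j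
      calc (c / m j + 1) * m j = c / m j * m j + m j := by ring
        _ ≤ c + 36 * c := add_le_add h1 h2
        _ = 37 * c := by ring
    calc vinf c * (m j : ℝ≥0∞)
        ≤ (((c / m j + 1 : ℕ) : ℝ≥0∞) * vis (p ∘ g j)) * (m j : ℝ≥0∞) :=
          mul_le_mul_left hP2 _
      _ = (((c / m j + 1) * m j : ℕ) : ℝ≥0∞) * vis (p ∘ g j) := by push_cast; ring
      _ ≤ ((37 * c : ℕ) : ℝ≥0∞) * vis (p ∘ g j) :=
          mul_le_mul_left (by exact_mod_cast Nat.cast_le.2 hnat) _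
  have hsumstep : vinf c * (A.card : ℝ≥0∞) ≤ ((37 * c : ℕ) : ℝ≥0∞) * vis (p ∘ σ) := by
    calc vinf c * (A.card : ℝ≥0∞) = vinf c * ((∑ j, m j : ℕ) : ℝ≥0∞) := by rw [hMsum]
      _ = ∑ j, vinf c * (m j : ℝ≥0∞) := by rw [Nat.cast_sum, Finset.mul_sum]
      _ ≤ ∑ j, ((37 * c : ℕ) : ℝ≥0∞) * vis (p ∘ g j) := Finset.sum_le_sum fun j _ => hstep j
      _ = ((37 * c : ℕ) : ℝ≥0∞) * ∑ j, vis (p ∘ g j) := (Finset.mul_sum _ _ _).symm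
      _ ≤ ((37 * c : ℕ) : ℝ≥0∞) * vis (p ∘ σ) := mul_le_mul_right (hGvis.trans hvis1) _
  have hkey : vinf c * (n : ℝ≥0∞) ≤ 148 * ((c : ℝ≥0∞) * vis (p ∘ σ)) := by
    have hn4 : (n : ℝ≥0∞) ≤ 4 * (A.card : ℝ≥0∞) := by
      have : ((n : ℕ) : ℝ≥0∞) ≤ ((4 * A.card : ℕ) : ℝ≥0∞) := Nat.cast_le.2 hw
      simpa using this
    calc vinf c * (n : ℝ≥0∞) ≤ vinf c * (4 * (A.card : ℝ≥0∞)) := mul_le_mul_right hn4 _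
      _ = 4 * (vinf c * (A.card : ℝ≥0∞)) := by ring
      _ ≤ 4 * (((37 * c : ℕ) : ℝ≥0∞) * vis (p ∘ σ)) := mul_le_mul_right hsumstep _
      _ = 148 * ((c : ℝ≥0∞) * vis (p ∘ σ)) := by push_cast; ring
  have hofReal : ENNReal.ofReal (1/148 : ℝ) = (148 : ℝ≥0∞)⁻¹ := by
    rw [one_div, ENNReal.ofReal_inv_of_pos (by norm_num)]; norm_num
  rw [hofReal, ENNReal.div_le_iff (by exact_mod_cast hc.ne' : (c:ℝ≥0∞) ≠ 0)
    (ENNReal.natCast_ne_top c)]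
  calc (148 : ℝ≥0∞)⁻¹ * vinf c * (n : ℝ≥0∞)
      = (148 : ℝ≥0∞)⁻¹ * (vinf c * (n : ℝ≥0∞)) := by ring
    _ ≤ (148 : ℝ≥0∞)⁻¹ * (148 * ((c:ℝ≥0∞) * vis (p ∘ σ))) := mul_le_mul_right hkey _
    _ = ((148 : ℝ≥0∞)⁻¹ * 148) * ((c:ℝ≥0∞) * vis (p ∘ σ)) := by ring
    _ = (c:ℝ≥0∞) * vis (p ∘ σ) := by
        rw [ENNReal.inv_mul_cancel (by norm_num) (by norm_num), one_mul]
    _ = vis (p ∘ σ) * (c:ℝ≥0∞) := mul_comm _ _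
end
end

section
/- For all positive integers c and r and every real δ > 0, setting n = r·c, there exists a set P of n distinct points in ℝ² such that no point of the plane lies in more than c of the closed unit disks centered at the points of P, and such that every enumeration (stacking order) p_1, …, p_n of P satisfies vis(p_1, …, p_n) ≤ r · (v(c) + δ). -/
open MeasureTheory Filter Set Metric
open scoped ENNReal NNReal Topology

noncomputable section

/-- Auxiliary: `vis` is invariant under translating all points by a fixed vector. -/
lemma vis_add_const {m : ℕ} (q : Fin m → Pt) (v : Pt) :
    vis (fun a => q a + v) = vis q := by
  unfold vis
  refine Finset.sum_congr rfl fun i _ => ?_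
  have hiso : Isometry (fun x : Pt => x + v) :=
    Isometry.of_dist_eq fun a b => dist_add_right a b v
  have himg : {x : Pt | dist x (q i + v) = 1 ∧ ∀ j : Fin m, j < i → 1 ≤ dist x (q j + v)}
      = (fun x : Pt => x + v) ''
        {x : Pt | dist x (q i) = 1 ∧ ∀ j : Fin m, j < i → 1 ≤ dist x (q j)} := by
    ext x
    constructor
    · rintro ⟨h1, h2⟩
      have key : ∀ y : Pt, dist (x - v) y = dist x (y + v) := fun y => by
        rw [← dist_add_right (x - v) y v, sub_add_cancel]
      refine ⟨x - v, ⟨?_, fun j hj => ?_⟩, sub_add_cancel x v⟩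
      · rw [key]; exact h1
      · rw [key]; exact h2 j hj
    · rintro ⟨y, ⟨h1, h2⟩, rfl⟩
      exact ⟨by rwa [dist_add_right], fun j hj => by rw [dist_add_right]; exact h2 j hj⟩
  rw [himg, hiso.hausdorffMeasure_image (Or.inl one_pos.le)]

/-- tightness of the bounded-overlap bound: there is a set of `n = r·c`
points with overlap at most `c` such that every stacking order has visible perimeter at
most `r·(v(c) + δ)`. -/
theorem exists_bounded_overlap_vis_le (c r : ℕ) (hc : 0 < c) (hr : 0 < r)
    (δ : ℝ) (hδ : 0 < δ) :
    ∃ p : Fin (r * c) → Pt, Function.Injective p ∧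
      (∀ x : Pt, ({i : Fin (r * c) | dist x (p i) ≤ 1}).ncard ≤ c) ∧
      ∀ σ : Equiv.Perm (Fin (r * c)),
        vis (p ∘ σ) ≤ (r : ℝ≥0∞) * (vinf c + ENNReal.ofReal δ) := by
  classical
  -- a near-optimal base configuration of `c` points
  obtain ⟨p0, hp0inj, hp0vis⟩ :
      ∃ p0 : Fin c → Pt, Function.Injective p0 ∧
        (⨆ τ : Equiv.Perm (Fin c), vis (p0 ∘ τ)) ≤ vinf c + ENNReal.ofReal δ := by
    by_cases htop : vinf c = ⊤
    · refine ⟨fun a => ((a : ℕ) : ℝ) • EuclideanSpace.single (0 : Fin 2) (1 : ℝ), ?_, by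
        simp [htop]⟩
      have he0 : (EuclideanSpace.single (0 : Fin 2) (1 : ℝ) : Pt) ≠ 0 := by
        intro h
        have := congrArg norm h
        rw [EuclideanSpace.norm_single] at this
        simp at this
      intro a b hab
      have := smul_left_injective ℝ he0 hab
      exact Fin.ext (by exact_mod_cast this)
    · have hlt : vinf c < vinf c + ENNReal.ofReal δ :=
        ENNReal.lt_add_right htop (ENNReal.ofReal_pos.mpr hδ).ne'
      rw [vinf] at hlt
      obtain ⟨p0, hp0⟩ := iInf_lt_iff.mp hlt
      obtain ⟨hinj, hlt2⟩ := iInf_lt_iff.mp hp0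
      exact ⟨p0, hinj, hlt2.le⟩
  -- a uniform bound on pairwise distances in the base configuration
  obtain ⟨D, hD⟩ := Finite.exists_le (fun z : Fin c × Fin c => dist (p0 z.1) (p0 z.2))
  have hD0 : 0 ≤ D := le_trans dist_nonneg (hD (⟨0, hc⟩, ⟨0, hc⟩))
  set e : Pt := EuclideanSpace.single (0 : Fin 2) (1 : ℝ) with he
  have hnorme : ‖e‖ = 1 := by rw [he, EuclideanSpace.norm_single]; simp
  set R : ℝ := D + 4 with hRdef
  set E : Fin (r * c) ≃ Fin r × Fin c :=
    (finProdFinEquiv : Fin r × Fin c ≃ Fin (r * c)).symm with hE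
  set pt : Fin r × Fin c → Pt := fun z => p0 z.2 + (R * ((z.1 : ℕ) : ℝ)) • e with hpt
  set p : Fin (r * c) → Pt := fun i => pt (E i) with hp
  -- distinct clusters are far apart
  have hfar : ∀ z w : Fin r × Fin c, z.1 ≠ w.1 → 4 ≤ dist (pt z) (pt w) := by
    intro z w hzw
    have h1 : (1 : ℝ) ≤ |((z.1 : ℕ) : ℝ) - ((w.1 : ℕ) : ℝ)| := by
      have hne : ((z.1 : ℕ) : ℤ) ≠ ((w.1 : ℕ) : ℤ) := by
        intro h
        exact hzw (Fin.ext (by exact_mod_cast h))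
      have h2 := Int.one_le_abs (sub_ne_zero.mpr hne)
      calc (1 : ℝ) ≤ ((|((z.1 : ℕ) : ℤ) - ((w.1 : ℕ) : ℤ)| : ℤ) : ℝ) := by exact_mod_cast h2
        _ = |((z.1 : ℕ) : ℝ) - ((w.1 : ℕ) : ℝ)| := by push_cast [Int.cast_abs]; ring_nf
    have hcalc : pt z - pt w
        = (R * ((z.1 : ℕ) : ℝ) - R * ((w.1 : ℕ) : ℝ)) • e + (p0 z.2 - p0 w.2) := by
      rw [hpt]; simp only [sub_smul]; abel
    have hnormsmul : ‖(R * ((z.1 : ℕ) : ℝ) - R * ((w.1 : ℕ) : ℝ)) • e‖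
        = R * |((z.1 : ℕ) : ℝ) - ((w.1 : ℕ) : ℝ)| := by
      rw [norm_smul, hnorme, mul_one, Real.norm_eq_abs, ← mul_sub, abs_mul,
        abs_of_nonneg (by rw [hRdef]; linarith)]
    have h3 : ‖p0 z.2 - p0 w.2‖ ≤ D := by rw [← dist_eq_norm]; exact hD (z.2, w.2)
    have h4 : ‖(R * ((z.1 : ℕ) : ℝ) - R * ((w.1 : ℕ) : ℝ)) • e‖
        ≤ ‖(R * ((z.1 : ℕ) : ℝ) - R * ((w.1 : ℕ) : ℝ)) • e + (p0 z.2 - p0 w.2)‖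
          + ‖p0 z.2 - p0 w.2‖ := by
      have := norm_add_le
        ((R * ((z.1 : ℕ) : ℝ) - R * ((w.1 : ℕ) : ℝ)) • e + (p0 z.2 - p0 w.2))
        (-(p0 z.2 - p0 w.2))
      rw [show ((R * ((z.1 : ℕ) : ℝ) - R * ((w.1 : ℕ) : ℝ)) • e + (p0 z.2 - p0 w.2))
          + -(p0 z.2 - p0 w.2) = (R * ((z.1 : ℕ) : ℝ) - R * ((w.1 : ℕ) : ℝ)) • e from by
        abel, norm_neg] at this
      exact this
    have h5 : R * 1 ≤ R * |((z.1 : ℕ) : ℝ) - ((w.1 : ℕ) : ℝ)| :=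
      mul_le_mul_of_nonneg_left h1 (by rw [hRdef]; linarith)
    rw [dist_eq_norm, hcalc]
    rw [hnormsmul] at h4
    rw [hRdef] at h5 ⊢
    nlinarith [h4, h3, h5]
  have hptinj : Function.Injective pt := by
    intro z w h
    by_cases h1 : z.1 = w.1
    · have h2 : p0 z.2 = p0 w.2 := by
        have := h
        rw [hpt] at this
        simp only [h1] at this
        exact add_right_cancel this
      exact Prod.ext h1 (hp0inj h2)
    · exfalso
      have := hfar z w h1
      rw [h, dist_self] at this
      linarith
  have hpinj : Function.Injective p := by
    intro i j h
    exact E.injective (hptinj h)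
  refine ⟨p, hpinj, ?_, ?_⟩
  · -- overlap bound
    intro x
    by_cases hne : ({i : Fin (r * c) | dist x (p i) ≤ 1}).Nonempty
    · obtain ⟨i0, hi0⟩ := hne
      have hsub : {i : Fin (r * c) | dist x (p i) ≤ 1} ⊆ {i | (E i).1 = (E i0).1} := by
        intro j hj
        by_contra hne2
        have h4 := hfar (E j) (E i0) hne2
        have htri := dist_triangle (pt (E j)) x (pt (E i0))
        have hj' : dist x (pt (E j)) ≤ 1 := hj
        have hi0' : dist x (pt (E i0)) ≤ 1 := hi0
        rw [dist_comm (pt (E j)) x] at htri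
        linarith
      refine le_trans (Set.ncard_le_ncard hsub (Set.toFinite _)) ?_
      have := Set.ncard_le_ncard_of_injOn (fun i => (E i).2)
        (fun i _ => Set.mem_univ ((E i).2) : ∀ i ∈ {i : Fin (r * c) | (E i).1 = (E i0).1},
          (E i).2 ∈ (Set.univ : Set (Fin c)))
        (fun i hi j hj hij => E.injective (Prod.ext (hi.trans hj.symm) hij))
        (Set.toFinite _)
      simpa [Set.ncard_univ] using this
    · rw [Set.not_nonempty_iff_eq_empty] at hne
      simp [hne]
  · -- the visible-perimeter bound
    intro σ
    set g : Fin (r * c) → Fin r := fun i => (E (σ i)).1 with hg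
    set B : Fin (r * c) → Set Pt := fun i =>
      {x : Pt | dist x (p (σ i)) = 1 ∧
        ∀ j : Fin (r * c), j < i → (g j = g i → 1 ≤ dist x (p (σ j)))} with hB
    have hstep1 : vis (p ∘ σ) = ∑ i : Fin (r * c), μH[1] (B i) := by
      unfold vis
      refine Finset.sum_congr rfl fun i _ => ?_
      congr 1
      ext x
      simp only [hB, Set.mem_setOf_eq, Function.comp_apply]
      constructor
      · rintro ⟨h1, h2⟩
        exact ⟨h1, fun j hj _ => h2 j hj⟩
      · rintro ⟨h1, h2⟩
        refine ⟨h1, fun j hj => ?_⟩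
        by_cases hgj : g j = g i
        · exact h2 j hj hgj
        · have h4 := hfar (E (σ j)) (E (σ i)) hgj
          have htri := dist_triangle (pt (E (σ j))) x (pt (E (σ i)))
          have h1' : dist x (pt (E (σ i))) = 1 := h1
          rw [dist_comm (pt (E (σ j))) x] at htri
          show (1 : ℝ) ≤ dist x (pt (E (σ j)))
          linarith
    have hclus : ∀ k : Fin r,
        ∑ i ∈ Finset.univ.filter (fun i => g i = k), μH[1] (B i)
          ≤ ⨆ τ : Equiv.Perm (Fin c), vis (p0 ∘ τ) := by
      intro k
      set S : Finset (Fin (r * c)) := Finset.univ.filter (fun i => g i = k) with hS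
      have hmemS : ∀ i : Fin (r * c), i ∈ S ↔ g i = k := by
        intro i; simp [hS]
      have hcard : S.card = c := by
        have : S.card = (Finset.univ : Finset (Fin c)).card := by
          refine Finset.card_bij' (fun i _ => (E (σ i)).2)
            (fun a _ => σ⁻¹ (E.symm (k, a))) (fun i _ => Finset.mem_univ _)
            (fun a _ => ?_) (fun i hi => ?_) (fun a _ => ?_)
          · rw [hmemS]
            simp [hg]
          · have hk : (E (σ i)).1 = k := (hmemS i).mp hi
            have heq : ((k, (E (σ i)).2) : Fin r × Fin c) = E (σ i) := Prod.ext hk.symm rfl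
            show σ⁻¹ (E.symm (k, (E (σ i)).2)) = i
            rw [heq, Equiv.symm_apply_apply, Equiv.Perm.inv_def, Equiv.symm_apply_apply]
          · simp
        simpa using this
      set ek := S.orderIsoOfFin hcard with hek
      have hmem : ∀ a : Fin c, g ((ek a : Fin (r * c))) = k :=
        fun a => (hmemS _).mp (ek a).2
      set τ : Fin c → Fin c := fun a => (E (σ (ek a))).2 with hτ
      have hτinj : Function.Injective τ := by
        intro a b h
        have hEe : E (σ (ek a)) = E (σ (ek b)) :=
          Prod.ext ((hmem a).trans (hmem b).symm) h
        have h1 : σ (ek a) = σ (ek b) := E.injective hEe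
        have h2 : (ek a : Fin (r * c)) = (ek b : Fin (r * c)) := σ.injective h1
        exact ek.injective (Subtype.ext h2)
      have hpoint : ∀ a : Fin c,
          p (σ (ek a)) = p0 (τ a) + (R * ((k : ℕ) : ℝ)) • e := by
        intro a
        have h1 : E (σ (ek a)) = (k, τ a) := Prod.ext (hmem a) rfl
        show pt (E (σ (ek a))) = _
        rw [h1]
      have hidx : ∀ a : Fin c, ∀ j : Fin (r * c),
          (j < (ek a : Fin (r * c)) ∧ g j = k) ↔ ∃ b : Fin c, b < a ∧ j = ek b := by
        intro a j
        constructor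
        · rintro ⟨hlt, hgj⟩
          have hjS : j ∈ S := (hmemS j).mpr hgj
          refine ⟨ek.symm ⟨j, hjS⟩, ?_, ?_⟩
          · rw [← ek.lt_iff_lt, ek.apply_symm_apply, ← Subtype.coe_lt_coe]
            exact hlt
          · rw [ek.apply_symm_apply]
        · rintro ⟨b, hba, rfl⟩
          exact ⟨Subtype.coe_lt_coe.mpr (ek.lt_iff_lt.mpr hba), hmem b⟩
      have hsetEq : ∀ a : Fin c, B (ek a)
          = {x : Pt | dist x (p0 (τ a) + (R * ((k : ℕ) : ℝ)) • e) = 1 ∧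
              ∀ b : Fin c, b < a →
                1 ≤ dist x (p0 (τ b) + (R * ((k : ℕ) : ℝ)) • e)} := by
        intro a
        ext x
        simp only [hB, Set.mem_setOf_eq, hpoint a]
        constructor
        · rintro ⟨h1, h2⟩
          refine ⟨h1, fun b hb => ?_⟩
          rw [← hpoint b]
          exact h2 (ek b) (Subtype.coe_lt_coe.mpr (ek.lt_iff_lt.mpr hb))
            ((hmem b).trans (hmem a).symm)
        · rintro ⟨h1, h2⟩
          refine ⟨h1, fun j hj hgj => ?_⟩
          obtain ⟨b, hba, rfl⟩ := (hidx a j).mp ⟨hj, hgj.trans (hmem a)⟩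
          rw [hpoint b]
          exact h2 b hba
      obtain ⟨τ', hτ'⟩ : ∃ τ' : Equiv.Perm (Fin c), ∀ a, τ' a = τ a :=
        ⟨Equiv.ofBijective τ (Finite.injective_iff_bijective.mp hτinj), fun a => rfl⟩
      have hsum : ∑ i ∈ S, μH[1] (B i) = vis (fun a => (p0 ∘ τ') a + (R * ((k : ℕ) : ℝ)) • e) := by
        rw [← Finset.sum_coe_sort S (fun i => μH[1] (B i))]
        rw [← Fintype.sum_equiv ek.toEquiv
          (fun a : Fin c => μH[1] (B ((ek a : Fin (r * c)))))
          (fun i : S => μH[1] (B (i : Fin (r * c)))) (fun a => rfl)]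
        unfold vis
        refine Finset.sum_congr rfl fun a _ => ?_
        rw [hsetEq a]
        congr 1
        ext x
        simp only [Set.mem_setOf_eq, Function.comp_apply, hτ']
      calc ∑ i ∈ S, μH[1] (B i)
          = vis (p0 ∘ τ') := by rw [hsum, vis_add_const]
        _ ≤ ⨆ τ'' : Equiv.Perm (Fin c), vis (p0 ∘ τ'') :=
            le_iSup (fun τ'' : Equiv.Perm (Fin c) => vis (p0 ∘ ⇑τ'')) τ'
    calc vis (p ∘ σ)
        = ∑ k : Fin r, ∑ i ∈ Finset.univ.filter (fun i => g i = k), μH[1] (B i) := by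
          rw [hstep1, Finset.sum_fiberwise]
      _ ≤ ∑ _k : Fin r, (⨆ τ : Equiv.Perm (Fin c), vis (p0 ∘ τ)) :=
          Finset.sum_le_sum fun k _ => hclus k
      _ = (r : ℝ≥0∞) * (⨆ τ : Equiv.Perm (Fin c), vis (p0 ∘ τ)) := by
          rw [Finset.sum_const, Finset.card_univ, Fintype.card_fin, nsmul_eq_mul]
      _ ≤ (r : ℝ≥0∞) * (vinf c + ENNReal.ofReal δ) := mul_le_mul_right hp0vis _
end
end

section
/- For all positive integers r and n, one has v(r·n) ≤ r · v(n). -/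
open MeasureTheory Filter Set Metric
open scoped ENNReal NNReal Topology

noncomputable section

lemma key_aux {n : ℕ} (r : ℕ) (hn : 0 < n) (p : Fin n → Pt)
    (hp : Function.Injective p) :
    vinf (r * n) ≤ (r : ℝ≥0∞) * ⨆ σ : Equiv.Perm (Fin n), vis (p ∘ σ) := by
  classical
  obtain ⟨R, hR⟩ := isBounded_iff_forall_norm_le.mp (Set.finite_range p).isBounded
  have hR0 : 0 ≤ R := le_trans (norm_nonneg _) (hR _ ⟨⟨0, hn⟩, rfl⟩)
  set L : ℝ := 2 * R + 1 with hL
  have hLpos : 0 < L := by positivity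
  set u : Pt := EuclideanSpace.single (0 : Fin 2) (1 : ℝ) with hu
  have hunorm : ‖u‖ = 1 := by simp [hu, EuclideanSpace.norm_single]
  set w : Fin r → Pt := fun m => ((m : ℝ) * L) • u with hw
  have hwsep : ∀ m m' : Fin r, m ≠ m' → L ≤ ‖w m - w m'‖ := by
    intro m m' hmm
    have h1 : w m - w m' = (((m : ℝ) - (m' : ℝ)) * L) • u := by
      show ((m : ℝ) * L) • u - ((m' : ℝ) * L) • u = _
      rw [← sub_smul]; congr 1; ring
    rw [h1, norm_smul, hunorm, mul_one, Real.norm_eq_abs, abs_mul, abs_of_pos hLpos]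
    have hmm' : (m : ℕ) ≠ (m' : ℕ) := fun h => hmm (Fin.ext h)
    have h2 : (1 : ℝ) ≤ |(m : ℝ) - (m' : ℝ)| := by
      rcases hmm'.lt_or_gt with h | h
      · rw [abs_sub_comm, abs_of_pos (by exact sub_pos.mpr (by exact_mod_cast h))]
        have : ((m : ℕ) : ℝ) + 1 ≤ ((m' : ℕ) : ℝ) := by exact_mod_cast h
        linarith
      · rw [abs_of_pos (by exact sub_pos.mpr (by exact_mod_cast h))]
        have : ((m' : ℕ) : ℝ) + 1 ≤ ((m : ℕ) : ℝ) := by exact_mod_cast h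
        linarith
    nlinarith
  set e := finProdFinEquiv (m := r) (n := n) with he
  set P : Fin (r * n) → Pt := fun k => p ((e.symm k).2) + w ((e.symm k).1) with hP
  have hPinj : Function.Injective P := by
    intro k k' h
    by_cases hm : (e.symm k).1 = (e.symm k').1
    · rw [show P k = p ((e.symm k).2) + w ((e.symm k).1) from rfl,
        show P k' = p ((e.symm k').2) + w ((e.symm k').1) from rfl, hm] at h
      have h2 : p ((e.symm k).2) = p ((e.symm k').2) := add_right_cancel h
      exact e.symm.injective (Prod.ext hm (hp h2))
    · exfalso
      have hsep := hwsep _ _ hm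
      have hE : w ((e.symm k).1) - w ((e.symm k').1)
          = p ((e.symm k').2) - p ((e.symm k).2) := by
        rw [sub_eq_sub_iff_add_eq_add, add_comm (w ((e.symm k).1)) (p ((e.symm k).2))]
        exact h
      rw [hE] at hsep
      have hle : ‖p ((e.symm k').2) - p ((e.symm k).2)‖ ≤ 2 * R := by
        calc ‖p ((e.symm k').2) - p ((e.symm k).2)‖
            ≤ ‖p ((e.symm k').2)‖ + ‖p ((e.symm k).2)‖ := norm_sub_le _ _
          _ ≤ R + R := add_le_add (hR _ ⟨_, rfl⟩) (hR _ ⟨_, rfl⟩)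
          _ = 2 * R := by ring
      rw [hL] at hsep; linarith
  have h1 : vinf (r * n) ≤ ⨆ σ : Equiv.Perm (Fin (r * n)), vis (P ∘ σ) := by
    rw [vinf]; exact iInf₂_le P hPinj
  refine h1.trans (iSup_le fun σ => ?_)
  set c : Fin (r * n) → Fin r := fun k => (e.symm (σ k)).1 with hc
  set d : Fin (r * n) → Fin n := fun k => (e.symm (σ k)).2 with hd
  set f : Fin (r * n) → ℝ≥0∞ := fun k =>
    μH[1] {x : Pt | dist x (P (σ k)) = 1 ∧ ∀ j : Fin (r * n), j < k → 1 ≤ dist x (P (σ j))}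
    with hf
  have hvis : vis (P ∘ σ) = ∑ k : Fin (r * n), f k := by rw [vis]; rfl
  rw [hvis, ← Finset.sum_fiberwise Finset.univ c f]
  set V := ⨆ τ : Equiv.Perm (Fin n), vis (p ∘ τ) with hV
  have hmain : ∀ m : Fin r, ∑ k ∈ Finset.univ.filter (fun k => c k = m), f k ≤ V := by
    intro m
    set S := Finset.univ.filter (fun k => c k = m) with hS
    have hSmem : ∀ k, k ∈ S ↔ c k = m := by intro k; simp [hS]
    have hcard : S.card = n := by
      have hcc : S.card = (Finset.univ : Finset (Fin n)).card := by
        apply Finset.card_nbij' d (fun i => σ.symm (e (m, i)))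
        · intro k hk; simp
        · intro i _
          rw [Finset.mem_coe, hSmem, hc]; simp
        · intro k hk
          have hck : c k = m := (hSmem k).mp hk
          rw [hd, ← hck, hc]
          simp
        · intro i _
          rw [hd]; simp
      simpa using hcc
    set ι := S.orderIsoOfFin hcard with hι
    have hcι : ∀ i : Fin n, c (ι i) = m := fun i => (hSmem _).mp (ι i).2
    set τ : Fin n → Fin n := fun i => d (ι i) with hτ
    have hτinj : Function.Injective τ := by
      intro i i' h
      have h2 : e.symm (σ (ι i)) = e.symm (σ (ι i')) := by
        refine Prod.ext ?_ ?_
        · show c (ι i : Fin (r * n)) = c (ι i' : Fin (r * n))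
          rw [hcι i, hcι i']
        · exact h
      exact ι.injective (Subtype.ext (σ.injective (e.symm.injective h2)))
    set τe : Equiv.Perm (Fin n) := Equiv.ofBijective τ (Finite.injective_iff_bijective.mp hτinj)
      with hτe
    have hPk : ∀ j : Fin n, P (σ (ι j)) = p (τe j) + w m := by
      intro j
      show p (d (ι j : Fin (r * n))) + w (c (ι j : Fin (r * n))) = p (τ j) + w m
      rw [hcι j]
    have hsum : ∑ k ∈ S, f k = ∑ i : Fin n, f (ι i) := by
      rw [← Finset.sum_coe_sort S f]
      exact (Equiv.sum_comp ι.toEquiv (fun k : {x // x ∈ S} => f k)).symm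
    rw [show (∑ k ∈ Finset.univ.filter (fun k => c k = m), f k) = ∑ k ∈ S, f k from rfl, hsum]
    have hterm : ∀ i : Fin n, f (ι i) ≤
        μH[1] {x : Pt | dist x (p (τe i)) = 1 ∧ ∀ j : Fin n, j < i → 1 ≤ dist x (p (τe j))} := by
      intro i
      set B := {x : Pt | dist x (p (τe i)) = 1 ∧ ∀ j : Fin n, j < i → 1 ≤ dist x (p (τe j))}
        with hB
      have hiso : Isometry (fun x : Pt => x + w m) :=
        Isometry.of_dist_eq fun a b => dist_add_right a b (w m)
      have himg : μH[1] ((fun x : Pt => x + w m) '' B) = μH[1] B :=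
        hiso.hausdorffMeasure_image (Or.inl zero_le_one) B
      rw [show f (ι i : Fin (r * n)) = μH[1] {x : Pt | dist x (P (σ (ι i))) = 1 ∧
        ∀ j : Fin (r * n), j < (ι i : Fin (r * n)) → 1 ≤ dist x (P (σ j))} from rfl, ← himg]
      apply measure_mono
      rintro x ⟨hx1, hx2⟩
      refine ⟨x - w m, ⟨?_, ?_⟩, sub_add_cancel x (w m)⟩
      · rw [← dist_add_right (x - w m) (p (τe i)) (w m), sub_add_cancel, ← hPk i]
        exact hx1
      · intro j hj
        rw [← dist_add_right (x - w m) (p (τe j)) (w m), sub_add_cancel, ← hPk j]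
        exact hx2 (ι j) (Subtype.coe_lt_coe.mpr (ι.strictMono hj))
    calc ∑ i : Fin n, f (ι i)
        ≤ ∑ i : Fin n, μH[1] {x : Pt | dist x (p (τe i)) = 1 ∧
            ∀ j : Fin n, j < i → 1 ≤ dist x (p (τe j))} :=
          Finset.sum_le_sum fun i _ => hterm i
      _ = vis (p ∘ τe) := by rw [vis]; rfl
      _ ≤ V := by rw [hV]; exact le_iSup (fun τ' : Equiv.Perm (Fin n) => vis (p ∘ τ')) τe
  calc ∑ m : Fin r, ∑ k ∈ Finset.univ.filter (fun k => c k = m), f k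
      ≤ ∑ _m : Fin r, V := Finset.sum_le_sum fun m _ => hmain m
    _ = (r : ℝ≥0∞) * V := by simp [Finset.sum_const, nsmul_eq_mul]

/-- `v(r·n) ≤ r · v(n)`. -/
theorem vinf_mul_le (r n : ℕ) (hr : 0 < r) (hn : 0 < n) :
    vinf (r * n) ≤ (r : ℝ≥0∞) * vinf n := by
  have hr0 : (r : ℝ≥0∞) ≠ 0 := Nat.cast_ne_zero.mpr hr.ne'
  have hrtop : (r : ℝ≥0∞) ≠ ⊤ := ENNReal.natCast_ne_top r
  conv_rhs => rw [vinf]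
  rw [ENNReal.mul_iInf_of_ne hr0 hrtop]
  refine le_iInf fun p => ?_
  by_cases hp : Function.Injective p
  · rw [ENNReal.mul_iInf_of_ne hr0 hrtop, iInf_pos hp]
    exact key_aux r hn p hp
  · rw [iInf_neg hp, ENNReal.mul_top hr0]
    exact le_top
end
end
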